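/- In Setup B, let J ∈ Λ with n+1 ∈ J, fix i₀ ∈ I'∖J, and let c = (c_i)_{i∈J} be integers. Then F(J,c) ⊆ C(J,c); that is, every x ∈ F(J,c) satisfies ⟨x, b_i⟩ > c_i for all i ∈ J (including the inequality ⟨x, b_{n+1}⟩ > c_{n+1}). -/

import Mathlib

open scoped RealInnerProductSpace BigOperators

noncomputable section

/-- Euclidean space `ℝⁿ` with the standard inner product. -/
abbrev E (n : ℕ) : Type := EuclideanSpace ℝ (Fin n)

/-- The index set `I' = {1,…,n'}` inside `Ī = {1,…,n+1}` (index `Fin.last n`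
plays the role of `n+1`). -/
def Iprime (n n' : ℕ) : Finset (Fin (n + 1)) := Finset.univ.filter fun i => i.val < n'

/-- `C(J,c) := {x ∈ ℝⁿ : ⟨x, b_i⟩ > c_i for all i ∈ J}`. -/
def CSet (n : ℕ) (b : Fin (n + 1) → E n) (J : Finset (Fin (n + 1)))
    (c : Fin (n + 1) → ℤ) : Set (E n) :=
  {x | ∀ i ∈ J, (c i : ℝ) < ⟪x, b i⟫}

/-- A multi-index `𝔪 = (m_i)_{i ∈ I'∖{i₀}}` is admissible if `m_i ≥ 0` for every
`i ∈ I' ∩ J` (recall `i₀ ∉ J`). -/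
def Admissible (n n' : ℕ) (J : Finset (Fin (n + 1))) (m : Fin (n + 1) → ℤ) : Prop :=
  ∀ i ∈ Iprime n n' ∩ J, 0 ≤ m i

/-- The ceiling bound
`⌈(c_{n+1} − Σ_{i∈I'∩J} α_i(c_i+m_i) − Σ_{i∈I'∩K₁} α_i m_i)/α_{i₀}⌉`,
where `K₁ = Ī∖(J∪{i₀})`, so `I'∩K₁ = (I'∖J)∖{i₀}`. -/
def ceilB (n n' : ℕ) (α : Fin (n + 1) → ℚ) (J : Finset (Fin (n + 1)))
    (i₀ : Fin (n + 1)) (c m : Fin (n + 1) → ℤ) : ℤ :=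
  ⌈((c (Fin.last n) : ℚ) - ∑ i ∈ Iprime n n' ∩ J, α i * ((c i : ℚ) + (m i : ℚ))
      - ∑ i ∈ (Iprime n n' \ J).erase i₀, α i * (m i : ℚ)) / α i₀⌉

/-- `V(J,c,𝔪)` as in Setup B. -/
def VSet (n n' : ℕ) (b : Fin (n + 1) → E n) (α : Fin (n + 1) → ℚ)
    (J : Finset (Fin (n + 1))) (i₀ : Fin (n + 1)) (c m : Fin (n + 1) → ℤ) :
    Set (E n) :=
  {x | (∀ i ∈ Iprime n n' ∩ J, ((c i : ℝ) + (m i : ℝ)) < ⟪x, b i⟫)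
    ∧ (∀ i ∈ (Iprime n n' \ J).erase i₀, (m i : ℝ) < ⟪x, b i⟫)
    ∧ (∀ i ∈ (J \ Iprime n n').erase (Fin.last n), (c i : ℝ) < ⟪x, b i⟫)
    ∧ ((ceilB n n' α J i₀ c m : ℝ) < ⟪x, b i₀⟫)}

/-- `F(J,c) := ⋃_{𝔪 admissible} V(J,c,𝔪)` (for `n+1 ∈ J`, with the choice `i₀`). -/
def FSetB (n n' : ℕ) (b : Fin (n + 1) → E n) (α : Fin (n + 1) → ℚ)
    (J : Finset (Fin (n + 1))) (i₀ : Fin (n + 1)) (c : Fin (n + 1) → ℤ) : Set (E n) :=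
  {x | ∃ m : Fin (n + 1) → ℤ, Admissible n n' J m ∧ x ∈ VSet n n' b α J i₀ c m}

/-- `F(J,c)` in general: the union above when `n+1 ∈ J`, and `C(J,c)` otherwise. -/
def FSetB' (n n' : ℕ) (b : Fin (n + 1) → E n) (α : Fin (n + 1) → ℚ)
    (J : Finset (Fin (n + 1))) (i₀ : Fin (n + 1)) (c : Fin (n + 1) → ℤ) : Set (E n) :=
  if Fin.last n ∈ J then FSetB n n' b α J i₀ c else CSet n b J c

/-- Setup B: for `J ∈ Λ` with `n+1 ∈ J`, a choice `i₀ ∈ I'∖J`, and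
integers `c`, one has `F(J,c) ⊆ C(J,c)`; that is, every `x ∈ F(J,c)` satisfies
`⟨x, b_i⟩ > c_i` for all `i ∈ J` (including `⟨x, b_{n+1}⟩ > c_{n+1}`). -/
theorem stmt10 (n n' : ℕ) (hn'1 : 1 ≤ n') (hn'n : n' ≤ n)
    (b : Fin (n + 1) → E n) (α : Fin (n + 1) → ℚ)
    (hb : LinearIndependent ℝ fun i : Fin n => b i.castSucc)
    (hspan : Submodule.span ℝ (Set.range fun i : Fin n => b i.castSucc) = ⊤)
    (hα : ∀ i : Fin (n + 1), i.val < n' → 0 < α i)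
    (hαsum : ∑ i ∈ Iprime n n', α i ≤ 1)
    (hlast : b (Fin.last n) = ∑ i ∈ Iprime n n', (α i : ℝ) • b i)
    (J : Finset (Fin (n + 1))) (hJne : J ≠ Finset.univ)
    (hJI : ¬ Iprime n n' ⊆ J) (hJlast : Fin.last n ∈ J)
    (i₀ : Fin (n + 1)) (hi₀ : i₀ ∈ Iprime n n' \ J)
    (c : Fin (n + 1) → ℤ) :
    FSetB n n' b α J i₀ c ⊆ CSet n b J c := by
  intro x hx
  obtain ⟨m, hm, h1, h2, h3, h4⟩ := hx
  intro i hi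
  by_cases hil : i = Fin.last n
  · subst hil
    -- the main case: the inequality for `n+1`
    have hi₀I : i₀ ∈ Iprime n n' := (Finset.mem_sdiff.mp hi₀).1
    have hi₀v : i₀.val < n' := by simpa [Iprime] using hi₀I
    have hαpos : ∀ j ∈ Iprime n n', (0:ℝ) < (α j : ℝ) := by
      intro j hj
      have : j.val < n' := by simpa [Iprime] using hj
      exact_mod_cast hα j this
    have hsplit : ∀ f : Fin (n+1) → ℝ,
        ∑ j ∈ Iprime n n', f j
          = ∑ j ∈ Iprime n n' ∩ J, f j
            + (∑ j ∈ (Iprime n n' \ J).erase i₀, f j + f i₀) := by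
      intro f
      rw [← Finset.sum_inter_add_sum_sdiff (Iprime n n') J f,
        ← Finset.sum_erase_add _ _ hi₀]
    have hinner : ⟪x, b (Fin.last n)⟫
        = ∑ j ∈ Iprime n n', (α j : ℝ) * ⟪x, b j⟫ := by
      rw [hlast, inner_sum]
      exact Finset.sum_congr rfl fun j _ => real_inner_smul_right x (b j) ((α j : ℝ))
    have hSA : ∑ j ∈ Iprime n n' ∩ J, ((α j:ℝ) * ((c j:ℝ) + (m j:ℝ)))
        ≤ ∑ j ∈ Iprime n n' ∩ J, (α j:ℝ) * ⟪x, b j⟫ :=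
      Finset.sum_le_sum fun j hj => by
        have := h1 j hj
        have hp := hαpos j (Finset.mem_of_mem_inter_left hj)
        nlinarith
    have hSB : ∑ j ∈ (Iprime n n' \ J).erase i₀, ((α j:ℝ) * (m j:ℝ))
        ≤ ∑ j ∈ (Iprime n n' \ J).erase i₀, (α j:ℝ) * ⟪x, b j⟫ :=
      Finset.sum_le_sum fun j hj => by
        have := h2 j hj
        have hp := hαpos j
          ((Finset.mem_sdiff.mp (Finset.mem_of_mem_erase hj)).1)
        nlinarith
    have hi₀pos : (0:ℝ) < (α i₀ : ℝ) := hαpos i₀ hi₀I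
    have hi₀posQ : (0:ℚ) < α i₀ := hα i₀ hi₀v
    have hceilQ : ((c (Fin.last n) : ℚ)
          - ∑ j ∈ Iprime n n' ∩ J, α j * ((c j : ℚ) + (m j : ℚ))
          - ∑ j ∈ (Iprime n n' \ J).erase i₀, α j * (m j : ℚ))
        ≤ (ceilB n n' α J i₀ c m : ℚ) * α i₀ := by
      have h := Int.le_ceil (((c (Fin.last n) : ℚ)
          - ∑ j ∈ Iprime n n' ∩ J, α j * ((c j : ℚ) + (m j : ℚ))
          - ∑ j ∈ (Iprime n n' \ J).erase i₀, α j * (m j : ℚ)) / α i₀)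
      rw [div_le_iff₀ hi₀posQ] at h
      exact h
    have hceilR : ((c (Fin.last n) : ℝ)
          - ∑ j ∈ Iprime n n' ∩ J, ((α j:ℝ) * ((c j:ℝ) + (m j:ℝ)))
          - ∑ j ∈ (Iprime n n' \ J).erase i₀, ((α j:ℝ) * (m j:ℝ)))
        ≤ (ceilB n n' α J i₀ c m : ℝ) * (α i₀ : ℝ) := by
      have := hceilQ
      have h2 : (((c (Fin.last n) : ℚ)
          - ∑ j ∈ Iprime n n' ∩ J, α j * ((c j : ℚ) + (m j : ℚ))
          - ∑ j ∈ (Iprime n n' \ J).erase i₀, α j * (m j : ℚ) : ℚ) : ℝ)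
        ≤ (((ceilB n n' α J i₀ c m : ℚ) * α i₀ : ℚ) : ℝ) := by exact_mod_cast this
      push_cast at h2
      convert h2 using 2
    have hlast' : (α i₀:ℝ) * ⟪x, b i₀⟫ > (α i₀:ℝ) * (ceilB n n' α J i₀ c m : ℝ) :=
      (mul_lt_mul_iff_right₀ hi₀pos).mpr h4
    rw [hinner, hsplit]
    nlinarith [hSA, hSB, hceilR, hlast']
  · by_cases hiI : i ∈ Iprime n n'
    · have hiA : i ∈ Iprime n n' ∩ J := Finset.mem_inter.mpr ⟨hiI, hi⟩
      have h := h1 i hiA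
      have hm0 : (0:ℝ) ≤ (m i : ℝ) := by exact_mod_cast hm i hiA
      linarith
    · exact h3 i (Finset.mem_erase.mpr ⟨hil, Finset.mem_sdiff.mpr ⟨hi, hiI⟩⟩)
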